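/- Let u : ℝ² → ℝ be C³ near a point x ∈ ℝ² with ∂₁u(x) = 0, ∂₂u(x) ≠ 0, ∂₁₁u(x) = 0, ∂₁₂u(x) = 0. Define T(y) = (∂₂₂u(y)∂₁u(y) − ∂₁₂u(y)∂₂u(y), ∂₁₁u(y)∂₂u(y) − ∂₁₂u(y)∂₁u(y)). Then the Jacobian determinant of T at x equals −(∂₂u(x))² · ((∂₁₁₂u(x))² − ∂₁₁₁u(x)·∂₁₂₂u(x)). -/

import Mathlib

/-- First partial derivative in the `x₁` direction. -/
noncomputable def d1 (u : ℝ × ℝ → ℝ) (x : ℝ × ℝ) : ℝ :=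
  deriv (fun t => u (t, x.2)) x.1

/-- First partial derivative in the `x₂` direction. -/
noncomputable def d2 (u : ℝ × ℝ → ℝ) (x : ℝ × ℝ) : ℝ :=
  deriv (fun t => u (x.1, t)) x.2

open Filter Topology

lemma slice1_diff {f : ℝ × ℝ → ℝ} {x : ℝ × ℝ} (hf : DifferentiableAt ℝ f x) :
    DifferentiableAt ℝ (fun t => f (t, x.2)) x.1 :=
  hf.comp x.1 (differentiableAt_id.prodMk (differentiableAt_const _))

lemma slice2_diff {f : ℝ × ℝ → ℝ} {x : ℝ × ℝ} (hf : DifferentiableAt ℝ f x) :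
    DifferentiableAt ℝ (fun t => f (x.1, t)) x.2 :=
  hf.comp x.2 ((differentiableAt_const _).prodMk differentiableAt_id)

lemma d1_eq_fderiv {f : ℝ × ℝ → ℝ} {y : ℝ × ℝ} (hf : DifferentiableAt ℝ f y) :
    d1 f y = fderiv ℝ f y (1, 0) := by
  have hL : HasFDerivAt (fun t : ℝ => (t, y.2))
      ((ContinuousLinearMap.id ℝ ℝ).prod 0) y.1 :=
    (hasFDerivAt_id y.1).prodMk (hasFDerivAt_const _ _)
  have h : HasFDerivAt (fun t : ℝ => f (t, y.2))
      ((fderiv ℝ f y).comp ((ContinuousLinearMap.id ℝ ℝ).prod 0)) y.1 :=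
    (hf.hasFDerivAt.comp y.1 hL)
  have := h.hasDerivAt.deriv
  simpa [d1] using this

lemma d2_eq_fderiv {f : ℝ × ℝ → ℝ} {y : ℝ × ℝ} (hf : DifferentiableAt ℝ f y) :
    d2 f y = fderiv ℝ f y (0, 1) := by
  have hL : HasFDerivAt (fun t : ℝ => (y.1, t))
      ((0 : ℝ →L[ℝ] ℝ).prod (ContinuousLinearMap.id ℝ ℝ)) y.2 :=
    (hasFDerivAt_const _ _).prodMk (hasFDerivAt_id y.2)
  have h : HasFDerivAt (fun t : ℝ => f (y.1, t))
      ((fderiv ℝ f y).comp ((0 : ℝ →L[ℝ] ℝ).prod (ContinuousLinearMap.id ℝ ℝ))) y.2 :=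
    (hf.hasFDerivAt.comp y.2 hL)
  have := h.hasDerivAt.deriv
  simpa [d2] using this

lemma contDiffAt_d1 {n : ℕ} {f : ℝ × ℝ → ℝ} {x : ℝ × ℝ}
    (hf : ContDiffAt ℝ (n + 1) f x) : ContDiffAt ℝ n (d1 f) x := by
  have hev : ∀ᶠ y in 𝓝 x, ContDiffAt ℝ (n + 1) f y := hf.eventually (by simp)
  have heq : d1 f =ᶠ[𝓝 x] fun y => fderiv ℝ f y (1, 0) := by
    filter_upwards [hev] with y hy
    exact d1_eq_fderiv (hy.differentiableAt (by simp))
  have hs : ContDiffAt ℝ n (fun y => fderiv ℝ f y (1, 0)) x :=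
    (hf.fderiv_right (by exact_mod_cast le_refl _)).clm_apply contDiffAt_const
  exact hs.congr_of_eventuallyEq heq

lemma contDiffAt_d2 {n : ℕ} {f : ℝ × ℝ → ℝ} {x : ℝ × ℝ}
    (hf : ContDiffAt ℝ (n + 1) f x) : ContDiffAt ℝ n (d2 f) x := by
  have hev : ∀ᶠ y in 𝓝 x, ContDiffAt ℝ (n + 1) f y := hf.eventually (by simp)
  have heq : d2 f =ᶠ[𝓝 x] fun y => fderiv ℝ f y (0, 1) := by
    filter_upwards [hev] with y hy
    exact d2_eq_fderiv (hy.differentiableAt (by simp))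
  have hs : ContDiffAt ℝ n (fun y => fderiv ℝ f y (0, 1)) x :=
    (hf.fderiv_right (by exact_mod_cast le_refl _)).clm_apply contDiffAt_const
  exact hs.congr_of_eventuallyEq heq

lemma d1_congr {f g : ℝ × ℝ → ℝ} {x : ℝ × ℝ} (h : f =ᶠ[𝓝 x] g) : d1 f x = d1 g x := by
  have ht : Tendsto (fun t : ℝ => (t, x.2)) (𝓝 x.1) (𝓝 x) := by
    have : Continuous (fun t : ℝ => (t, x.2)) := by fun_prop
    simpa using this.tendsto x.1
  exact Filter.EventuallyEq.deriv_eq (h.comp_tendsto ht)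

lemma d2_congr {f g : ℝ × ℝ → ℝ} {x : ℝ × ℝ} (h : f =ᶠ[𝓝 x] g) : d2 f x = d2 g x := by
  have ht : Tendsto (fun t : ℝ => (x.1, t)) (𝓝 x.2) (𝓝 x) := by
    have : Continuous (fun t : ℝ => (x.1, t)) := by fun_prop
    simpa using this.tendsto x.2
  exact Filter.EventuallyEq.deriv_eq (h.comp_tendsto ht)

lemma schwarz {f : ℝ × ℝ → ℝ} {x : ℝ × ℝ} (hf : ContDiffAt ℝ 2 f x) :
    d1 (d2 f) x = d2 (d1 f) x := by
  have hev : ∀ᶠ y in 𝓝 x, ContDiffAt ℝ 2 f y := hf.eventually (by simp)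
  have h1 : d1 f =ᶠ[𝓝 x] fun y => fderiv ℝ f y (1, 0) := by
    filter_upwards [hev] with y hy
    exact d1_eq_fderiv (hy.differentiableAt two_ne_zero)
  have h2 : d2 f =ᶠ[𝓝 x] fun y => fderiv ℝ f y (0, 1) := by
    filter_upwards [hev] with y hy
    exact d2_eq_fderiv (hy.differentiableAt two_ne_zero)
  have hF : DifferentiableAt ℝ (fderiv ℝ f) x :=
    (hf.fderiv_right (m := 1) (le_refl _)).differentiableAt one_ne_zero
  have hd1 : DifferentiableAt ℝ (fun y => fderiv ℝ f y (1, 0)) x :=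
    hF.clm_apply (differentiableAt_const _)
  have hd2 : DifferentiableAt ℝ (fun y => fderiv ℝ f y (0, 1)) x :=
    hF.clm_apply (differentiableAt_const _)
  have e1 : d1 (d2 f) x = fderiv ℝ (fderiv ℝ f) x (1, 0) (0, 1) := by
    rw [d1_congr h2, d1_eq_fderiv hd2,
      fderiv_clm_apply hF (differentiableAt_const _)]
    simp
  have e2 : d2 (d1 f) x = fderiv ℝ (fderiv ℝ f) x (0, 1) (1, 0) := by
    rw [d2_congr h1, d2_eq_fderiv hd1,
      fderiv_clm_apply hF (differentiableAt_const _)]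
    simp
  rw [e1, e2]
  exact hf.isSymmSndFDerivAt (by simp) (1, 0) (0, 1)

lemma d1_mul_sub {f g h k : ℝ × ℝ → ℝ} {x : ℝ × ℝ}
    (hf : DifferentiableAt ℝ f x) (hg : DifferentiableAt ℝ g x)
    (hh : DifferentiableAt ℝ h x) (hk : DifferentiableAt ℝ k x) :
    d1 (fun y => f y * g y - h y * k y) x =
      (d1 f x * g x + f x * d1 g x) - (d1 h x * k x + h x * d1 k x) := by
  have hf1 := slice1_diff hf
  have hg1 := slice1_diff hg
  have hh1 := slice1_diff hh
  have hk1 := slice1_diff hk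
  show deriv (fun t => f (t, x.2) * g (t, x.2) - h (t, x.2) * k (t, x.2)) x.1 = _
  rw [deriv_fun_sub (hf1.fun_mul hg1) (hh1.fun_mul hk1), deriv_fun_mul hf1 hg1, deriv_fun_mul hh1 hk1]
  rfl

lemma d2_mul_sub {f g h k : ℝ × ℝ → ℝ} {x : ℝ × ℝ}
    (hf : DifferentiableAt ℝ f x) (hg : DifferentiableAt ℝ g x)
    (hh : DifferentiableAt ℝ h x) (hk : DifferentiableAt ℝ k x) :
    d2 (fun y => f y * g y - h y * k y) x =
      (d2 f x * g x + f x * d2 g x) - (d2 h x * k x + h x * d2 k x) := by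
  have hf1 := slice2_diff hf
  have hg1 := slice2_diff hg
  have hh1 := slice2_diff hh
  have hk1 := slice2_diff hk
  show deriv (fun t => f (x.1, t) * g (x.1, t) - h (x.1, t) * k (x.1, t)) x.2 = _
  rw [deriv_fun_sub (hf1.fun_mul hg1) (hh1.fun_mul hk1), deriv_fun_mul hf1 hg1, deriv_fun_mul hh1 hk1]
  rfl

/-- Jacobian determinant of `T` at a degenerate directional critical point. -/
theorem jacobian_T_at_M_point (u : ℝ × ℝ → ℝ) (x : ℝ × ℝ)
    (hu : ContDiffAt ℝ 3 u x)
    (h1 : d1 u x = 0) (h2 : d2 u x ≠ 0)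
    (h11 : d1 (d1 u) x = 0) (h12 : d2 (d1 u) x = 0)
    (T1 T2 : ℝ × ℝ → ℝ)
    (hT1 : T1 = fun y => d2 (d2 u) y * d1 u y - d2 (d1 u) y * d2 u y)
    (hT2 : T2 = fun y => d1 (d1 u) y * d2 u y - d2 (d1 u) y * d1 u y) :
    d1 T1 x * d2 T2 x - d2 T1 x * d1 T2 x =
      -(d2 u x) ^ 2 *
        ((d2 (d1 (d1 u)) x) ^ 2 - d1 (d1 (d1 u)) x * d2 (d2 (d1 u)) x) := by
  have hu3 : ContDiffAt ℝ ((2 : ℕ) + 1) u x := by exact_mod_cast hu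
  have c2_d1u : ContDiffAt ℝ ((1 : ℕ) + 1) (d1 u) x := by
    have := contDiffAt_d1 (n := 2) hu3; exact_mod_cast this
  have c2_d2u : ContDiffAt ℝ ((1 : ℕ) + 1) (d2 u) x := by
    have := contDiffAt_d2 (n := 2) hu3; exact_mod_cast this
  have c1_d11 : ContDiffAt ℝ (1 : ℕ) (d1 (d1 u)) x := contDiffAt_d1 (n := 1) c2_d1u
  have c1_d21 : ContDiffAt ℝ (1 : ℕ) (d2 (d1 u)) x := contDiffAt_d2 (n := 1) c2_d1u
  have c1_d22 : ContDiffAt ℝ (1 : ℕ) (d2 (d2 u)) x := contDiffAt_d2 (n := 1) c2_d2u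
  have D11 : DifferentiableAt ℝ (d1 (d1 u)) x := c1_d11.differentiableAt (by simp)
  have D21 : DifferentiableAt ℝ (d2 (d1 u)) x := c1_d21.differentiableAt (by simp)
  have D22 : DifferentiableAt ℝ (d2 (d2 u)) x := c1_d22.differentiableAt (by simp)
  have D1 : DifferentiableAt ℝ (d1 u) x := c2_d1u.differentiableAt (by simp)
  have D2 : DifferentiableAt ℝ (d2 u) x := c2_d2u.differentiableAt (by simp)
  have hs : d1 (d2 (d1 u)) x = d2 (d1 (d1 u)) x := by
    have := schwarz (f := d1 u) (x := x) (by exact_mod_cast c2_d1u)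
    exact this
  have e11 : d1 T1 x = (d1 (d2 (d2 u)) x * d1 u x + d2 (d2 u) x * d1 (d1 u) x) -
      (d1 (d2 (d1 u)) x * d2 u x + d2 (d1 u) x * d1 (d2 u) x) := by
    rw [hT1]; exact d1_mul_sub D22 D1 D21 D2
  have e12 : d2 T1 x = (d2 (d2 (d2 u)) x * d1 u x + d2 (d2 u) x * d2 (d1 u) x) -
      (d2 (d2 (d1 u)) x * d2 u x + d2 (d1 u) x * d2 (d2 u) x) := by
    rw [hT1]; exact d2_mul_sub D22 D1 D21 D2
  have e21 : d1 T2 x = (d1 (d1 (d1 u)) x * d2 u x + d1 (d1 u) x * d1 (d2 u) x) -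
      (d1 (d2 (d1 u)) x * d1 u x + d2 (d1 u) x * d1 (d1 u) x) := by
    rw [hT2]; exact d1_mul_sub D11 D2 D21 D1
  have e22 : d2 T2 x = (d2 (d1 (d1 u)) x * d2 u x + d1 (d1 u) x * d2 (d2 u) x) -
      (d2 (d2 (d1 u)) x * d1 u x + d2 (d1 u) x * d2 (d1 u) x) := by
    rw [hT2]; exact d2_mul_sub D11 D2 D21 D1
  rw [e11, e12, e21, e22, h1, h11, h12, hs]
  ring
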